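/- Let D be a finite distributive lattice with |D| ≥ 3, let A be its set of atoms and C its set of coatoms. Then D \ {⊥, ⊤} can be written as the union of max(|A|, |C|) closed intervals [a, c] with a ∈ A, c ∈ C (i.e., there exists a family of at most max(|A|,|C|) pairs (a,c) ∈ A × C whose intervals Icc a c have union D \ {⊥, ⊤}). -/

import Mathlib

open Finset
open scoped Classical
open scoped Fin.NatCast Fin.CommRing

section Aux
variable {D : Type*} [DistribLattice D] [Fintype D] [BoundedOrder D]

set_option linter.unusedSectionVars false

noncomputable def mmc (c : D) : D := (univ.filter (fun x : D => ¬ x ≤ c)).inf id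

lemma inf_not_le {c : D} (hc : IsCoatom c) (s : Finset D) (hs : ∀ x ∈ s, ¬ x ≤ c) :
    ¬ s.inf id ≤ c := by
  induction s using Finset.induction_on with
  | empty => simp only [Finset.inf_empty]; exact fun h => hc.1 (top_le_iff.mp h)
  | @insert x s hx ih =>
      intro hle
      rw [Finset.inf_insert] at hle
      have hxc : ¬ x ≤ c := hs x (mem_insert_self _ _)
      have hic : ¬ s.inf id ≤ c := ih (fun y hy => hs y (mem_insert_of_mem hy))
      have h1 : c ⊔ x = ⊤ := hc.2 _ (left_lt_sup.mpr hxc)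
      have h2 : c ⊔ s.inf id = ⊤ := hc.2 _ (left_lt_sup.mpr hic)
      have : c = ⊤ := by
        have := (sup_eq_left.mpr hle).symm
        simp only [id_eq] at this
        rwa [sup_inf_left, h1, h2, inf_idem] at this
      exact hc.1 this

lemma mmc_not_le {c : D} (hc : IsCoatom c) : ¬ mmc c ≤ c :=
  inf_not_le hc _ (by simp)

lemma mmc_le_of_not_le {c x : D} (h : ¬ x ≤ c) : mmc c ≤ x := by
  simpa [mmc] using Finset.inf_le (f := id) (by simp [h] : x ∈ univ.filter (fun x : D => ¬ x ≤ c))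

lemma not_le_of_mmc_le {c x : D} (hc : IsCoatom c) (h : mmc c ≤ x) : ¬ x ≤ c :=
  fun hxc => mmc_not_le hc (h.trans hxc)

lemma mmc_ne_bot {c : D} (hc : IsCoatom c) : mmc c ≠ ⊥ :=
  fun h => mmc_not_le hc (h ▸ bot_le)

noncomputable def mAt (a : D) : D := (univ.filter (fun y : D => ¬ a ≤ y)).sup id

lemma sup_not_ge {a : D} (ha : IsAtom a) (s : Finset D) (hs : ∀ y ∈ s, ¬ a ≤ y) :
    ¬ a ≤ s.sup id := by
  induction s using Finset.induction_on with
  | empty => simp only [Finset.sup_empty]; exact fun h => ha.1 (le_bot_iff.mp h)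
  | @insert x s hx ih =>
      intro hle
      rw [Finset.sup_insert] at hle
      have hxc : ¬ a ≤ x := hs x (mem_insert_self _ _)
      have hic : ¬ a ≤ s.sup id := ih (fun y hy => hs y (mem_insert_of_mem hy))
      have h1 : a ⊓ x = ⊥ := ha.2 _ (inf_lt_left.mpr hxc)
      have h2 : a ⊓ s.sup id = ⊥ := ha.2 _ (inf_lt_left.mpr hic)
      have : a = ⊥ := by
        have := (inf_eq_left.mpr hle).symm
        simp only [id_eq] at this
        rwa [inf_sup_left, h1, h2, sup_idem] at this
      exact ha.1 this

lemma exists_coatom_cover {a : D} (ha : IsAtom a) : ∃ c : D, IsCoatom c ∧ a ≤ mmc c := by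
  have h1 : ¬ a ≤ mAt a := sup_not_ge ha _ (by simp)
  have h2 : mAt a ≠ ⊤ := fun h => h1 (h ▸ le_top)
  obtain ⟨c, hc, hle⟩ := (IsCoatomic.eq_top_or_exists_le_coatom (mAt a)).resolve_left h2
  refine ⟨c, hc, ?_⟩
  by_contra hna
  have hmem : mmc c ∈ univ.filter (fun y : D => ¬ a ≤ y) := by simp [hna]
  have : mmc c ≤ mAt a := by simpa [mAt] using Finset.le_sup (f := id) hmem
  exact mmc_not_le hc (this.trans hle)

end Aux

/-- **Theorem 1.** Let `𝒜` be the atoms and `𝒞` the coatoms of a finite distributive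
lattice `D` with `|D| ≥ 3`. Then `D \ {⊥, ⊤}` is the union of `max(|𝒜|, |𝒞|)`
intervals `[a, c]` with `a` an atom and `c` a coatom. -/
theorem stmt1 {D : Type*} [DistribLattice D] [Fintype D] [BoundedOrder D]
    (hcard : 3 ≤ Fintype.card D) :
    ∃ F : Finset (D × D),
      F.card ≤ max {a : D | IsAtom a}.ncard {c : D | IsCoatom c}.ncard ∧
      (∀ p ∈ F, IsAtom p.1 ∧ IsCoatom p.2) ∧
      (⋃ p ∈ F, Set.Icc p.1 p.2) = Set.univ \ {⊥, ⊤} := by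
  have hnt : Nontrivial D := Fintype.one_lt_card_iff_nontrivial.mp (by omega)
  set AF : Finset D := univ.filter (fun a : D => IsAtom a) with hAF
  set CF : Finset D := univ.filter (fun c : D => IsCoatom c) with hCF
  have hmemAF : ∀ a : D, a ∈ AF ↔ IsAtom a := by intro a; simp [hAF]
  have hmemCF : ∀ c : D, c ∈ CF ↔ IsCoatom c := by intro c; simp [hCF]
  -- the collection of matchings
  set S : Finset (Finset (D × D)) := ((AF ×ˢ CF).powerset).filter
    (fun N => (∀ p ∈ N, p.1 ≤ mmc p.2) ∧ Set.InjOn Prod.fst (N : Set (D × D)) ∧ Set.InjOn Prod.snd (N : Set (D × D)))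
    with hS
  have hSne : S.Nonempty := ⟨∅, by simp [hS]⟩
  obtain ⟨M, hMS, hMmax⟩ := S.exists_max_image Finset.card hSne
  rw [hS, mem_filter, mem_powerset] at hMS
  obtain ⟨hMsub, hMedge, hMinj1, hMinj2⟩ := hMS
  -- maximality: no augmenting edge
  have hext : ∀ a c : D, a ∈ AF → c ∈ CF → a ≤ mmc c →
      (∀ p ∈ M, p.1 ≠ a) → (∀ p ∈ M, p.2 ≠ c) → False := by
    intro a c haf hcf he hna hnc
    have hnm : (a, c) ∉ M := fun h => hna _ h rfl
    have hMS' : insert (a, c) M ∈ S := by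
      rw [hS, mem_filter, mem_powerset]
      refine ⟨?_, ?_, ?_, ?_⟩
      · intro p hp
        rcases mem_insert.mp hp with h | h
        · subst h; exact mem_product.mpr ⟨haf, hcf⟩
        · exact hMsub h
      · intro p hp
        rcases mem_insert.mp hp with h | h
        · subst h; exact he
        · exact hMedge p h
      · intro p hp q hq hpq
        simp only [Finset.coe_insert, Set.mem_insert_iff, mem_coe] at hp hq
        rcases hp with hp | hp <;> rcases hq with hq | hq
        · rw [hp, hq]
        · exact absurd (by rw [← hpq, hp] : q.1 = a) (hna q hq)
        · exact absurd (by rw [hpq, hq] : p.1 = a) (hna p hp)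
        · exact hMinj1 hp hq hpq
      · intro p hp q hq hpq
        simp only [Finset.coe_insert, Set.mem_insert_iff, mem_coe] at hp hq
        rcases hp with hp | hp <;> rcases hq with hq | hq
        · rw [hp, hq]
        · exact absurd (by rw [← hpq, hp] : q.2 = c) (hnc q hq)
        · exact absurd (by rw [hpq, hq] : p.2 = c) (hnc p hp)
        · exact hMinj2 hp hq hpq
    have := hMmax _ hMS'
    rw [card_insert_of_notMem hnm] at this
    omega
  -- M is nonempty
  have hMne : M.Nonempty := by
    rw [nonempty_iff_ne_empty]
    intro hemp
    have hbt : (⊥ : D) ≠ ⊤ := bot_ne_top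
    obtain ⟨a₀, ha₀⟩ := (eq_bot_or_exists_atom_le (⊤ : D)).resolve_left (Ne.symm hbt)
    obtain ⟨c₀, hc₀, hac₀⟩ := exists_coatom_cover ha₀.1
    exact hext a₀ c₀ ((hmemAF _).mpr ha₀.1) ((hmemCF _).mpr hc₀) hac₀
      (by simp [hemp]) (by simp [hemp])
  set k : ℕ := M.card with hk
  have hkpos : 0 < k := card_pos.mpr hMne
  haveI : NeZero k := ⟨hkpos.ne'⟩
  set e : Fin k ≃ {p // p ∈ M} := M.equivFin.symm with he
  set A : Fin k → D := fun i => ((e i : D × D)).1 with hA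
  set C : Fin k → D := fun i => ((e i : D × D)).2 with hC
  have hmemM : ∀ i : Fin k, (A i, C i) ∈ M := by
    intro i
    have := (e i).2
    simpa [hA, hC] using this
  have hsurjM : ∀ p ∈ M, ∃ i : Fin k, A i = p.1 ∧ C i = p.2 := by
    intro p hp
    refine ⟨M.equivFin ⟨p, hp⟩, ?_, ?_⟩ <;>
      simp [hA, hC, he, Equiv.symm_apply_apply]
  have hedge_i : ∀ i : Fin k, A i ≤ mmc (C i) := fun i => hMedge _ (hmemM i)
  have hAatom : ∀ i : Fin k, IsAtom (A i) := by
    intro i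
    have := mem_product.mp (hMsub (hmemM i))
    exact (hmemAF _).mp this.1
  have hCcoatom : ∀ i : Fin k, IsCoatom (C i) := by
    intro i
    have := mem_product.mp (hMsub (hmemM i))
    exact (hmemCF _).mp this.2
  -- unmatched vertices
  set Pu : Finset D := AF \ M.image Prod.fst with hPu
  set Qu : Finset D := CF \ M.image Prod.snd with hQu
  set uL : List D := Pu.toList with huL
  set vL : List D := Qu.toList with hvL
  set padL : List (D × D) := (List.range (max uL.length vL.length)).map
    (fun i => (uL.getD i (A 0), vL.getD i (C 0))) with hpadL
  set cyc : Finset (D × D) := Finset.image (fun i : Fin k => (A i, C (i + 1))) univ with hcyc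
  set F : Finset (D × D) := cyc ∪ padL.toFinset with hF
  -- membership of pad components
  have hu : ∀ i : ℕ, uL.getD i (A 0) ∈ AF := by
    intro i
    by_cases h : i < uL.length
    · rw [List.getD_eq_getElem _ _ h]
      have : uL[i] ∈ uL := List.getElem_mem h
      exact sdiff_subset (Finset.mem_toList.mp this)
    · rw [List.getD_eq_default _ _ (le_of_not_gt h)]
      exact (hmemAF _).mpr (hAatom 0)
  have hv : ∀ i : ℕ, vL.getD i (C 0) ∈ CF := by
    intro i
    by_cases h : i < vL.length
    · rw [List.getD_eq_getElem _ _ h]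
      have : vL[i] ∈ vL := List.getElem_mem h
      exact sdiff_subset (Finset.mem_toList.mp this)
    · rw [List.getD_eq_default _ _ (le_of_not_gt h)]
      exact (hmemCF _).mpr (hCcoatom 0)
  have hFmem : ∀ p ∈ F, IsAtom p.1 ∧ IsCoatom p.2 := by
    intro p hp
    rcases mem_union.mp hp with h | h
    · obtain ⟨i, -, rfl⟩ := mem_image.mp h
      exact ⟨hAatom i, hCcoatom (i + 1)⟩
    · rw [List.mem_toFinset, hpadL, List.mem_map] at h
      obtain ⟨i, -, rfl⟩ := h
      exact ⟨(hmemAF _).mp (hu i), (hmemCF _).mp (hv i)⟩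
  refine ⟨F, ?_, hFmem, ?_⟩
  · -- cardinality bound
    have himg1 : M.image Prod.fst ⊆ AF := by
      intro a ha; obtain ⟨p, hp, rfl⟩ := mem_image.mp ha
      exact (mem_product.mp (hMsub hp)).1
    have himg2 : M.image Prod.snd ⊆ CF := by
      intro c hc; obtain ⟨p, hp, rfl⟩ := mem_image.mp hc
      exact (mem_product.mp (hMsub hp)).2
    have hc1 : (M.image Prod.fst).card = k := card_image_of_injOn hMinj1
    have hc2 : (M.image Prod.snd).card = k := card_image_of_injOn hMinj2
    have hkA : k ≤ AF.card := hc1 ▸ card_le_card himg1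
    have hkC : k ≤ CF.card := hc2 ▸ card_le_card himg2
    have hul : uL.length = AF.card - k := by
      rw [huL, Finset.length_toList, hPu, card_sdiff_of_subset himg1, hc1]
    have hvl : vL.length = CF.card - k := by
      rw [hvL, Finset.length_toList, hQu, card_sdiff_of_subset himg2, hc2]
    have hcyck : cyc.card ≤ k := by
      rw [hcyc]
      exact (card_image_le).trans (by simp)
    have hpadk : padL.toFinset.card ≤ max uL.length vL.length := by
      refine (List.toFinset_card_le _).trans ?_
      rw [hpadL]
      simp
    have h1 : F.card ≤ k + max uL.length vL.length := by
      rw [hF]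
      exact (card_union_le _ _).trans (Nat.add_le_add hcyck hpadk)
    have hA' : {a : D | IsAtom a}.ncard = AF.card := by
      rw [← Set.ncard_coe_finset]
      congr 1
      ext a; simp [hAF]
    have hC' : {c : D | IsCoatom c}.ncard = CF.card := by
      rw [← Set.ncard_coe_finset]
      congr 1
      ext c; simp [hCF]
    rw [hA', hC']
    rw [hul, hvl] at h1
    omega
  · -- union equality
    ext x
    simp only [Set.mem_iUnion, Set.mem_Icc, Set.mem_diff, Set.mem_univ, true_and,
      Set.mem_insert_iff, Set.mem_singleton_iff, not_or, exists_prop]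
    constructor
    · rintro ⟨p, hpF, hax, hxc⟩
      obtain ⟨hpa, hpc⟩ := hFmem p hpF
      constructor
      · rintro rfl; exact hpa.1 (le_bot_iff.mp hax)
      · rintro rfl; exact hpc.1 (top_le_iff.mp hxc)
    · rintro ⟨hxbot, hxtop⟩
      by_contra hcov
      push_neg at hcov
      have h0 : ∀ p ∈ F, p.1 ≤ x → mmc p.2 ≤ x := fun p hp h1 =>
        mmc_le_of_not_le (hcov p hp h1)
      have hcycF : ∀ i : Fin k, (A i, C (i + 1)) ∈ F := fun i =>
        mem_union_left _ (mem_image.mpr ⟨i, mem_univ _, rfl⟩)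
      have hstepC : ∀ i : Fin k, A i ≤ x → mmc ((A i, C (i + 1)).2) ≤ x := fun i h =>
        h0 (A i, C (i + 1)) (hcycF i) h
      have hstep : ∀ i : Fin k, A i ≤ x → A (i + 1) ≤ x := fun i h =>
        (hedge_i (i + 1)).trans (hstepC i h)
      have horbit : ∀ i j : Fin k, A i ≤ x → A j ≤ x := by
        intro i j h
        have key : ∀ n : ℕ, A (i + (n : Fin k)) ≤ x := by
          intro n
          induction n with
          | zero => simpa using h
          | succ n ih =>
              have h2 := hstep _ ih
              have h3 : i + ((n : Fin k)) + 1 = i + (((n + 1 : ℕ) : Fin k)) := by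
                push_cast; ring
              rwa [h3] at h2
        have h4 : i + ((((j - i) : Fin k).val : Fin k)) = j := by
          rw [Fin.cast_val_eq_self]; ring
        exact h4 ▸ key _
      have hpadF : ∀ i : ℕ, i < max uL.length vL.length →
          (uL.getD i (A 0), vL.getD i (C 0)) ∈ F := by
        intro i hi
        exact mem_union_right _ (List.mem_toFinset.mpr
          (List.mem_map.mpr ⟨i, List.mem_range.mpr hi, rfl⟩))
      have hbase : ∃ i : Fin k, A i ≤ x := by
        obtain ⟨a₀, ha₀, ha₀x⟩ := (eq_bot_or_exists_atom_le x).resolve_left hxbot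
        by_cases hm : ∃ p ∈ M, p.1 = a₀
        · obtain ⟨p, hp, hp1⟩ := hm
          obtain ⟨i, hi1, -⟩ := hsurjM p hp
          exact ⟨i, by rw [hi1, hp1]; exact ha₀x⟩
        · push_neg at hm
          have ha₀Pu : a₀ ∈ Pu := by
            rw [hPu, mem_sdiff]
            refine ⟨(hmemAF _).mpr ha₀, ?_⟩
            intro hmem
            obtain ⟨p, hp, hp1⟩ := mem_image.mp hmem
            exact hm p hp hp1
          obtain ⟨n, hnlt, hn⟩ := List.mem_iff_getElem.mp (Finset.mem_toList.mpr ha₀Pu)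
          have hsrc : uL.getD n (A 0) = a₀ := by
            rw [List.getD_eq_getElem _ _ hnlt]; exact hn
          have hFn := hpadF n (lt_of_lt_of_le hnlt (le_max_left _ _))
          have hmmt : mmc (vL.getD n (C 0)) ≤ x := h0 _ hFn (by rw [hsrc]; exact ha₀x)
          have htcco : IsCoatom (vL.getD n (C 0)) := (hmemCF _).mp (hv n)
          by_cases hlen : n < vL.length
          · have htcQu : vL.getD n (C 0) ∈ Qu := by
              rw [List.getD_eq_getElem _ _ hlen]
              exact Finset.mem_toList.mp (List.getElem_mem hlen)
            have htcun : ∀ p ∈ M, p.2 ≠ vL.getD n (C 0) := by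
              intro p hp hp2
              rw [hQu, mem_sdiff] at htcQu
              exact htcQu.2 (mem_image.mpr ⟨p, hp, hp2⟩)
            obtain ⟨a', ha', ha'le⟩ :=
              (eq_bot_or_exists_atom_le (mmc (vL.getD n (C 0)))).resolve_left (mmc_ne_bot htcco)
            by_cases hm' : ∃ p ∈ M, p.1 = a'
            · obtain ⟨p, hp, hp1⟩ := hm'
              obtain ⟨i, hi1, -⟩ := hsurjM p hp
              exact ⟨i, by rw [hi1, hp1]; exact ha'le.trans hmmt⟩
            · push_neg at hm'
              exact (hext a' _ ((hmemAF _).mpr ha') ((hmemCF _).mpr htcco) ha'le hm' htcun).elim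
          · have htceq : vL.getD n (C 0) = C 0 :=
              List.getD_eq_default _ _ (le_of_not_gt hlen)
            rw [htceq] at hmmt
            exact ⟨0, (hedge_i 0).trans hmmt⟩
      obtain ⟨i₀, hi₀⟩ := hbase
      have hAall : ∀ i : Fin k, A i ≤ x := fun i => horbit i₀ i hi₀
      have hCall : ∀ i : Fin k, mmc (C i) ≤ x := by
        intro i
        have := hstepC (i - 1) (hAall (i - 1))
        rwa [show i - 1 + 1 = i by ring] at this
      have hatom_all : ∀ a : D, IsAtom a → a ≤ x := by
        intro a ha
        by_cases hm : ∃ p ∈ M, p.1 = a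
        · obtain ⟨p, hp, hp1⟩ := hm
          obtain ⟨i, hi1, -⟩ := hsurjM p hp
          rw [← hp1, ← hi1]; exact hAall i
        · push_neg at hm
          obtain ⟨c, hc, hac⟩ := exists_coatom_cover ha
          by_cases hm2 : ∃ p ∈ M, p.2 = c
          · obtain ⟨p, hp, hp2⟩ := hm2
            obtain ⟨i, -, hi2⟩ := hsurjM p hp
            have := hCall i
            rw [hi2, hp2] at this
            exact hac.trans this
          · push_neg at hm2
            exact (hext a c ((hmemAF _).mpr ha) ((hmemCF _).mpr hc) hac hm hm2).elim
      have hcoatom_all : ∀ c : D, IsCoatom c → mmc c ≤ x := by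
        intro c hc
        by_cases hm2 : ∃ p ∈ M, p.2 = c
        · obtain ⟨p, hp, hp2⟩ := hm2
          obtain ⟨i, -, hi2⟩ := hsurjM p hp
          have := hCall i
          rwa [hi2, hp2] at this
        · push_neg at hm2
          have hcQu : c ∈ Qu := by
            rw [hQu, mem_sdiff]
            refine ⟨(hmemCF _).mpr hc, ?_⟩
            intro hmem
            obtain ⟨p, hp, hp2⟩ := mem_image.mp hmem
            exact hm2 p hp hp2
          obtain ⟨n, hnlt, hn⟩ := List.mem_iff_getElem.mp (Finset.mem_toList.mpr hcQu)
          have htgt : vL.getD n (C 0) = c := by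
            rw [List.getD_eq_getElem _ _ hnlt]; exact hn
          have hFn := hpadF n (lt_of_lt_of_le hnlt (le_max_right _ _))
          have hsrca : IsAtom (uL.getD n (A 0)) := (hmemAF _).mp (hu n)
          have := h0 _ hFn (hatom_all _ hsrca)
          rwa [htgt] at this
      obtain ⟨c, hc, hxc⟩ := (eq_top_or_exists_le_coatom x).resolve_left hxtop
      exact not_le_of_mmc_le hc (hcoatom_all c hc) hxc
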